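/- arXiv:1811.06737 — 5 statements merged into one kernel-verified Lean document; each statement's English description precedes it below -/
import Mathlib

section
/- For integers 0 ≤ k ≤ n, the cardinality of H^k_n, the set of sub-exceeding functions on [n] whose values form a weakly increasing sequence with image exactly {0,1,...,k}, equals the binomial coefficient C(n,k). -/
namespace Stmt1Aux

variable {n : ℕ}

def cnt (S : Finset (Fin n)) (i : ℕ) : ℕ := (S.filter fun j : Fin n => (j : ℕ) < i).card

lemma cnt_zero (S : Finset (Fin n)) : cnt S 0 = 0 := by
  simp [cnt]

lemma cnt_mono (S : Finset (Fin n)) : Monotone (cnt S) := by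
  intro a b hab
  apply Finset.card_le_card
  intro j hj
  simp only [Finset.mem_filter] at hj ⊢
  exact ⟨hj.1, lt_of_lt_of_le hj.2 hab⟩

lemma cnt_le (S : Finset (Fin n)) (i : ℕ) : cnt S i ≤ i := by
  have := Finset.card_le_card_of_injOn (fun j : Fin n => (j : ℕ))
    (s := S.filter fun j : Fin n => (j : ℕ) < i) (t := Finset.range i)
    (by intro a ha; simp at ha ⊢; exact ha.2)
    (by intro a _ b _ h; exact Fin.ext h)
  simpa [cnt] using this

lemma cnt_split (S : Finset (Fin n)) (i : ℕ) :
    cnt S (i+1) = cnt S i + (S.filter fun j : Fin n => (j : ℕ) = i).card := by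
  unfold cnt
  have h1 : (S.filter fun j : Fin n => (j : ℕ) < i + 1)
      = (S.filter fun j : Fin n => (j : ℕ) < i) ∪ (S.filter fun j : Fin n => (j : ℕ) = i) := by
    rw [← Finset.filter_or]
    apply Finset.filter_congr
    intro j _
    constructor
    · intro h; omega
    · intro h; omega
  rw [h1, Finset.card_union_of_disjoint]
  rw [Finset.disjoint_filter]
  intro j _ hj
  omega

lemma cnt_succ_le (S : Finset (Fin n)) (i : ℕ) : cnt S (i+1) ≤ cnt S i + 1 := by
  rw [cnt_split]
  have : (S.filter fun j : Fin n => (j : ℕ) = i).card ≤ 1 := by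
    apply Finset.card_le_one.mpr
    intro a ha b hb
    simp at ha hb
    exact Fin.ext (ha.2.trans hb.2.symm)
  omega

lemma cnt_succ_mem (S : Finset (Fin n)) (j : Fin n) :
    cnt S ((j : ℕ) + 1) = cnt S (j : ℕ) + (if j ∈ S then 1 else 0) := by
  rw [cnt_split]
  congr 1
  by_cases h : j ∈ S
  · simp only [h, if_true]
    have : (S.filter fun x : Fin n => (x : ℕ) = (j : ℕ)) = {j} := by
      ext x
      simp only [Finset.mem_filter, Finset.mem_singleton]
      constructor
      · rintro ⟨hx, hx2⟩; exact Fin.ext hx2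
      · rintro rfl; exact ⟨h, rfl⟩
    rw [this]; simp
  · simp only [h, if_false]
    rw [Finset.card_eq_zero]
    rw [Finset.filter_eq_empty_iff]
    intro x hx hx2
    exact h (Fin.ext hx2 ▸ hx)

lemma cnt_top (S : Finset (Fin n)) (i : ℕ) (hi : n ≤ i) : cnt S i = S.card := by
  unfold cnt
  congr 1
  apply Finset.filter_true_of_mem
  intro j _
  exact lt_of_lt_of_le j.isLt hi

lemma ivt (g : ℕ → ℕ) (hg0 : g 0 = 0) (h : ∀ i, g (i+1) ≤ g i + 1) :
    ∀ N m : ℕ, m ≤ g N → ∃ i ≤ N, g i = m := by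
  intro N
  induction N with
  | zero => intro m hm; exact ⟨0, le_refl 0, by omega⟩
  | succ N ih =>
    intro m hm
    by_cases hc : m ≤ g N
    · obtain ⟨i, hi, hgi⟩ := ih m hc
      exact ⟨i, by omega, hgi⟩
    · exact ⟨N + 1, le_refl _, by have := h N; omega⟩

def psi (S : Finset (Fin n)) : Fin (n+1) → Fin (n+1) :=
  fun i => ⟨cnt S (i : ℕ), by
    have h1 : cnt S (i : ℕ) ≤ S.card := by
      rw [← cnt_top S (max n (i : ℕ)) (le_max_left _ _)]
      exact cnt_mono S (le_max_right _ _)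
    have h2 : S.card ≤ n := by
      have := Finset.card_le_card (Finset.subset_univ S)
      simpa using this
    omega⟩

lemma psi_sub (S : Finset (Fin n)) : ∀ i : Fin (n+1), ((psi S i : Fin (n+1)) : ℕ) ≤ (i : ℕ) :=
  fun i => cnt_le S i

lemma psi_mono (S : Finset (Fin n)) : Monotone (psi S) := by
  intro a b hab
  simp only [psi, Fin.mk_le_mk, Fin.le_def]
  exact cnt_mono S (Fin.le_def.mp hab)

lemma psi_range {k : ℕ} (hk : k ≤ n) (S : Finset (Fin n)) (hS : S.card = k) :
    Set.range (psi S) = {x : Fin (n+1) | (x : ℕ) ≤ k} := by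
  ext x
  simp only [Set.mem_range, Set.mem_setOf_eq]
  constructor
  · rintro ⟨i, rfl⟩
    show cnt S (i : ℕ) ≤ k
    calc cnt S (i : ℕ) ≤ cnt S n := cnt_mono S (by omega)
    _ = k := by rw [cnt_top S n le_rfl, hS]
  · intro hx
    have : (x : ℕ) ≤ cnt S n := by rw [cnt_top S n le_rfl, hS]; exact hx
    obtain ⟨i, hi, hgi⟩ := ivt (cnt S) (cnt_zero S) (cnt_succ_le S) n (x : ℕ) this
    refine ⟨⟨i, by omega⟩, ?_⟩
    exact Fin.ext hgi

-- main reconstruction lemma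
lemma main_eq {k : ℕ} (f : Fin (n+1) → Fin (n+1))
    (hsub : ∀ i, (f i : ℕ) ≤ (i : ℕ)) (hmono : Monotone f)
    (hrange : Set.range f = {x : Fin (n+1) | (x : ℕ) ≤ k}) :
    ∀ i : Fin (n+1), (f i : ℕ) = cnt (Finset.univ.filter fun j : Fin n => f j.castSucc ≠ f j.succ) (i : ℕ) := by
  set S := Finset.univ.filter fun j : Fin n => f j.castSucc ≠ f j.succ with hSdef
  have hle : ∀ i, (f i : ℕ) ≤ k := by
    intro i
    have : f i ∈ Set.range f := ⟨i, rfl⟩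
    rw [hrange] at this
    exact this
  have hjump : ∀ j : Fin n, (f j.succ : ℕ) ≤ (f j.castSucc : ℕ) + 1 := by
    intro j
    by_contra hcon
    push_neg at hcon
    set v : ℕ := (f j.castSucc : ℕ) + 1 with hv
    have hvk : v ≤ k := le_trans (by omega) (hle j.succ)
    have hvmem : (⟨v, by omega⟩ : Fin (n+1)) ∈ Set.range f := by
      rw [hrange]; exact hvk
    obtain ⟨i, hi⟩ := hvmem
    have hvi : (f i : ℕ) = v := by rw [hi]
    by_cases hij : (i : ℕ) ≤ (j.castSucc : ℕ)
    · have := hmono (Fin.le_def.mpr hij)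
      rw [Fin.le_def] at this
      omega
    · have : j.succ ≤ i := by
        rw [Fin.le_def, Fin.val_succ]
        simp only [Fin.coe_castSucc] at hij
        omega
      have := hmono this
      rw [Fin.le_def] at this
      omega
  intro i
  induction i using Fin.induction with
  | zero =>
    have := hsub 0
    simp at this ⊢
    rw [cnt_zero]
    rw [this, Fin.val_zero]
  | succ j ih =>
    have hmle : (f j.castSucc : ℕ) ≤ (f j.succ : ℕ) :=
      Fin.le_def.mp (hmono (Fin.castSucc_le_succ j))
    have hstep : (f j.succ : ℕ) = (f j.castSucc : ℕ) + (if j ∈ S then 1 else 0) := by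
      by_cases h : j ∈ S
      · simp only [h, if_true]
        have hne : f j.castSucc ≠ f j.succ := by
          rw [hSdef] at h
          simpa using h
        have : (f j.castSucc : ℕ) ≠ (f j.succ : ℕ) := fun he => hne (Fin.ext he)
        have := hjump j
        omega
      · simp only [h, if_false]
        have heq : f j.castSucc = f j.succ := by
          rw [hSdef] at h
          simpa using h
        rw [heq]; omega
    rw [Fin.val_succ, cnt_succ_mem, hstep]
    simp only [Fin.coe_castSucc] at ih
    omega

def Psi {k : ℕ} (hk : k ≤ n) :
    {s : Finset (Fin n) // s.card = k} →
    {f : Fin (n+1) → Fin (n+1) //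
        (∀ i, (f i : ℕ) ≤ (i : ℕ)) ∧ Monotone f ∧
        Set.range f = {x : Fin (n+1) | (x : ℕ) ≤ k}} :=
  fun ⟨S, hS⟩ => ⟨psi S, psi_sub S, psi_mono S, psi_range hk S hS⟩

lemma Psi_bij {k : ℕ} (hk : k ≤ n) : Function.Bijective (Psi (n := n) hk) := by
  constructor
  · rintro ⟨S, hS⟩ ⟨S', hS'⟩ h
    have hfun : psi S = psi S' := congrArg Subtype.val h
    have hcnt : ∀ i : ℕ, i ≤ n → cnt S i = cnt S' i := by
      intro i hi
      have := congrFun hfun ⟨i, by omega⟩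
      exact congrArg Fin.val this
    apply Subtype.ext
    ext j
    have h1 := cnt_succ_mem S j
    have h2 := cnt_succ_mem S' j
    have e1 : cnt S (j : ℕ) = cnt S' (j : ℕ) := hcnt _ (by omega)
    have e2 : cnt S ((j : ℕ) + 1) = cnt S' ((j : ℕ) + 1) := hcnt _ (by omega)
    by_cases hj : j ∈ S <;> by_cases hj' : j ∈ S' <;>
      simp [hj, hj'] at h1 h2 ⊢ <;> omega
  · rintro ⟨f, hsub, hmono, hrange⟩
    set S := Finset.univ.filter fun j : Fin n => f j.castSucc ≠ f j.succ with hSdef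
    have hmain := main_eq f hsub hmono hrange
    have hflast : (f (Fin.last n) : ℕ) = k := by
      have h1 : (f (Fin.last n) : ℕ) ≤ k := by
        have : f (Fin.last n) ∈ Set.range f := ⟨_, rfl⟩
        rw [hrange] at this; exact this
      have h2 : (⟨k, by omega⟩ : Fin (n+1)) ∈ Set.range f := by
        rw [hrange]; exact le_refl k
      obtain ⟨i, hi⟩ := h2
      have := hmono (Fin.le_last i)
      rw [Fin.le_def, hi] at this
      simp at this
      omega
    have hcard : S.card = k := by
      have := hmain (Fin.last n)
      rw [hflast] at this
      simp only [Fin.val_last] at this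
      rw [cnt_top S n le_rfl] at this
      omega
    refine ⟨⟨S, hcard⟩, ?_⟩
    apply Subtype.ext
    funext i
    exact Fin.ext ((hmain i).symm)

end Stmt1Aux

theorem stmt1 (n k : ℕ) (hk : k ≤ n) :
    Nat.card {f : Fin (n+1) → Fin (n+1) //
        (∀ i, (f i : ℕ) ≤ (i : ℕ)) ∧ Monotone f ∧
        Set.range f = {x : Fin (n+1) | (x : ℕ) ≤ k}} = n.choose k := by
  have e := Equiv.ofBijective _ (Stmt1Aux.Psi_bij (n := n) (k := k) hk)
  rw [Nat.card_congr e.symm]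
  rw [Nat.card_eq_fintype_card]
  rw [Fintype.card_finset_len]
  simp
end

section
/- For integers 0 < k < n, Card(H^k_n) = Card(H^{k-1}_{n-1}) + Card(H^k_{n-1}). -/
/-- `H n k` : weakly increasing sub-exceeding functions on `[n]` with image `{0,...,k}`. -/
def H (n k : ℕ) : Set (Fin (n+1) → Fin (n+1)) :=
  {f | (∀ i, (f i : ℕ) ≤ (i : ℕ)) ∧ Monotone f ∧
       Set.range f = {x : Fin (n+1) | (x : ℕ) ≤ k}}

lemma H_last {n k : ℕ} {f : Fin (n+1) → Fin (n+1)} (hf : f ∈ H n k) (hk : k ≤ n) :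
    (f (Fin.last n) : ℕ) = k := by
  obtain ⟨hsub, hmono, hrange⟩ := hf
  have h1 : (⟨k, by omega⟩ : Fin (n+1)) ∈ Set.range f := by
    rw [hrange]; simp
  obtain ⟨i, hi⟩ := h1
  have h2 : f i ≤ f (Fin.last n) := hmono (Fin.le_last i)
  have h3 : f (Fin.last n) ∈ Set.range f := ⟨_, rfl⟩
  rw [hrange] at h3
  simp only [Set.mem_setOf_eq] at h3
  have := Fin.le_iff_val_le_val.mp h2
  rw [hi] at this
  simp at this
  omega

/-- restriction to `Fin (m+1)` -/
def res (m : ℕ) (f : Fin (m+2) → Fin (m+2)) (hf : ∀ i, (f i : ℕ) ≤ (i : ℕ)) :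
    Fin (m+1) → Fin (m+1) :=
  fun i => ⟨(f i.castSucc : ℕ), by
    have := hf i.castSucc
    simp only [Fin.coe_castSucc] at this
    omega⟩

/-- extension by `j+1` at the last point -/
def ext (m j : ℕ) (g : Fin (m+1) → Fin (m+1)) (hj : j < m) : Fin (m+2) → Fin (m+2) :=
  fun i => if h : (i : ℕ) < m + 1 then (g ⟨i, h⟩).castSucc else ⟨j+1, by omega⟩

lemma res_mem {m j : ℕ} (hj : j < m) {f : Fin (m+2) → Fin (m+2)}
    (hf : f ∈ H (m+1) (j+1)) {k : ℕ} (hk : (f ⟨m, by omega⟩ : ℕ) = k) :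
    res m f hf.1 ∈ H m k := by
  obtain ⟨hsub, hmono, hrange⟩ := hf
  have hkle : k ≤ j + 1 := by
    have : f ⟨m, by omega⟩ ∈ Set.range f := ⟨_, rfl⟩
    rw [hrange] at this; simp only [Set.mem_setOf_eq] at this; omega
  refine ⟨fun i => ?_, fun a b hab => ?_, ?_⟩
  · simpa [res] using hsub i.castSucc
  · exact hmono (by simpa [Fin.castSucc_le_castSucc_iff] using hab)
  · ext x
    simp only [Set.mem_range, Set.mem_setOf_eq]
    constructor
    · rintro ⟨i, rfl⟩
      have h2 : f i.castSucc ≤ f ⟨m, by omega⟩ := hmono (by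
        simp [Fin.le_def]; omega)
      simp only [res]
      have := Fin.le_iff_val_le_val.mp h2
      omega
    · intro hx
      have hkle2 : (x : ℕ) ≤ j + 1 := by omega
      have hmem : (⟨x, by omega⟩ : Fin (m+2)) ∈ Set.range f := by
        rw [hrange]; simp; omega
      obtain ⟨i, hi⟩ := hmem
      have hival : (f i : ℕ) = x := by rw [hi]
      by_cases hilt : (i : ℕ) < m + 1
      · refine ⟨⟨i, hilt⟩, ?_⟩
        apply Fin.ext
        simp only [res]
        have h2 : Fin.castSucc (⟨(i:ℕ), hilt⟩ : Fin (m+1)) = i := by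
          apply Fin.ext; simp
        rw [h2, hival]
      · have hieq : i = Fin.last (m+1) := by
          apply Fin.ext; simp only [Fin.val_last]; omega
        have hlast : (f (Fin.last (m+1)) : ℕ) = j + 1 :=
          H_last ⟨hsub, hmono, hrange⟩ (by omega)
        have hxval : (x : ℕ) = j + 1 := by rw [hieq] at hival; omega
        have hkval : k = j + 1 := by omega
        refine ⟨⟨m, by omega⟩, ?_⟩
        apply Fin.ext
        simp only [res]
        have h2 : Fin.castSucc (⟨m, by omega⟩ : Fin (m+1)) = (⟨m, by omega⟩ : Fin (m+2)) := by
          apply Fin.ext; simp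
        rw [h2, hk]
        omega
  
lemma ext_mem {m j k : ℕ} (hj : j < m) {g : Fin (m+1) → Fin (m+1)}
    (hg : g ∈ H m k) (hk1 : j ≤ k) (hk2 : k ≤ j + 1) :
    ext m j g hj ∈ H (m+1) (j+1) := by
  obtain ⟨hsub, hmono, hrange⟩ := hg
  have hgle : ∀ i, (g i : ℕ) ≤ k := by
    intro i
    have : g i ∈ Set.range g := ⟨_, rfl⟩
    rw [hrange] at this; exact this
  refine ⟨fun i => ?_, fun a b hab => ?_, ?_⟩
  · simp only [ext]
    split
    · next h => have := hsub ⟨i, h⟩; simpa using this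
    · next h => omega
  · simp only [ext]
    rw [Fin.le_def] at hab
    split
    · next ha =>
      split
      · next hb =>
        have := hmono (a := ⟨a, ha⟩) (b := ⟨b, hb⟩) (by rwa [Fin.le_def])
        exact Fin.castSucc_le_castSucc_iff.mpr this
      · next hb =>
        rw [Fin.le_def, Fin.coe_castSucc]
        have := hgle ⟨a, ha⟩
        simp only [Fin.val_mk] at this ⊢
        omega
    · next ha =>
      have hb : ¬ ((b:ℕ) < m + 1) := by omega
      rw [dif_neg hb]
  · ext x
    simp only [Set.mem_range, Set.mem_setOf_eq]
    constructor
    · rintro ⟨i, rfl⟩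
      simp only [ext]
      split
      · next h => have := hgle ⟨i, h⟩; simp only [Fin.coe_castSucc]; omega
      · simp
    · intro hx
      rcases Nat.lt_or_ge (x:ℕ) (k+1) with hlt | hge
      · have : (⟨x, by omega⟩ : Fin (m+1)) ∈ Set.range g := by
          rw [hrange]; simp; omega
        obtain ⟨i, hi⟩ := this
        refine ⟨i.castSucc, ?_⟩
        apply Fin.ext
        simp only [ext]
        have hilt : (i.castSucc : ℕ) < m + 1 := by simp only [Fin.coe_castSucc]; omega
        rw [dif_pos hilt]
        have h2 : (⟨(i.castSucc : ℕ), hilt⟩ : Fin (m+1)) = i := by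
          apply Fin.ext; simp
        rw [Fin.coe_castSucc, h2, hi]
      · -- x = j+1 and k = j
        have hxval : (x:ℕ) = j + 1 := by omega
        refine ⟨Fin.last (m+1), ?_⟩
        apply Fin.ext
        simp only [ext]
        rw [dif_neg (by simp)]
        simp [hxval]

lemma ext_last_pred {m j k : ℕ} (hj : j < m) {g : Fin (m+1) → Fin (m+1)}
    (hg : g ∈ H m k) (hk : k ≤ m) :
    (ext m j g hj ⟨m, by omega⟩ : ℕ) = k := by
  simp only [ext]
  rw [dif_pos (by omega)]
  exact H_last hg hk

lemma res_ext {m j : ℕ} (hj : j < m) (g : Fin (m+1) → Fin (m+1))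
    (hsub : ∀ i, (ext m j g hj i : ℕ) ≤ (i : ℕ)) :
    res m (ext m j g hj) hsub = g := by
  funext i
  apply Fin.ext
  simp only [res, ext]
  rw [dif_pos (by simp; omega)]
  simp

lemma ext_res {m j : ℕ} (hj : j < m) {f : Fin (m+2) → Fin (m+2)}
    (hf : f ∈ H (m+1) (j+1)) :
    ext m j (res m f hf.1) hj = f := by
  funext i
  apply Fin.ext
  simp only [ext, res]
  split
  · next h => simp
  · next h =>
    have : i = Fin.last (m+1) := by apply Fin.ext; simp; omega
    subst this
    simp [H_last hf (by omega)]

noncomputable def Hequiv (m j : ℕ) (hj : j < m) :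
    H (m+1) (j+1) ≃ (H m j ⊕ H m (j+1)) where
  toFun := fun ⟨f, hf⟩ =>
    if h : (f ⟨m, by omega⟩ : ℕ) = j + 1 then
      Sum.inr ⟨res m f hf.1, res_mem hj hf h⟩
    else
      Sum.inl ⟨res m f hf.1, res_mem hj hf (k := j) (by
        -- f ⟨m⟩ ∈ {j, j+1}
        obtain ⟨hsub, hmono, hrange⟩ := hf
        have hle : (f ⟨m, by omega⟩ : ℕ) ≤ j + 1 := by
          have : f ⟨m, by omega⟩ ∈ Set.range f := ⟨_, rfl⟩
          rw [hrange] at this; exact this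
        have : (⟨j, by omega⟩ : Fin (m+2)) ∈ Set.range f := by
          rw [hrange]; simp
        obtain ⟨i, hi⟩ := this
        have hival : (f i : ℕ) = j := by rw [hi]
        have hlast : (f (Fin.last (m+1)) : ℕ) = j + 1 :=
          H_last ⟨hsub, hmono, hrange⟩ (by omega)
        have hne : i ≠ Fin.last (m+1) := by
          intro hc; rw [hc] at hival; omega
        have hile : i ≤ (⟨m, by omega⟩ : Fin (m+2)) := by
          rw [Fin.le_def]
          have := Fin.lt_last_iff_ne_last.mpr hne
          rw [Fin.lt_def] at this
          simp at this ⊢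
          omega
        have := Fin.le_iff_val_le_val.mp (hmono hile)
        omega)⟩
  invFun := fun x => match x with
    | Sum.inl ⟨g, hg⟩ => ⟨ext m j g hj, ext_mem hj hg (le_refl j) (by omega)⟩
    | Sum.inr ⟨g, hg⟩ => ⟨ext m j g hj, ext_mem hj hg (by omega) (le_refl _)⟩
  left_inv := by
    rintro ⟨f, hf⟩
    by_cases h : (f ⟨m, by omega⟩ : ℕ) = j + 1
    · simp only [dif_pos h]
      exact Subtype.ext (ext_res hj hf)
    · simp only [dif_neg h]
      exact Subtype.ext (ext_res hj hf)
  right_inv := by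
    rintro (⟨g, hg⟩ | ⟨g, hg⟩)
    · have hval : (ext m j g hj ⟨m, by omega⟩ : ℕ) = j := ext_last_pred hj hg (by omega)
      simp only [dif_neg (by omega : ¬ ((ext m j g hj ⟨m, by omega⟩ : ℕ) = j + 1))]
      congr 1
      exact Subtype.ext (res_ext hj g (ext_mem hj hg (le_refl j) (by omega)).1)
    · have hval : (ext m j g hj ⟨m, by omega⟩ : ℕ) = j + 1 := ext_last_pred hj hg (by omega)
      simp only [dif_pos hval]
      congr 1
      exact Subtype.ext (res_ext hj g (ext_mem hj hg (by omega) (le_refl _)).1)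

theorem stmt2 (n k : ℕ) (h1 : 0 < k) (h2 : k < n) :
    Nat.card (H n k) = Nat.card (H (n-1) (k-1)) + Nat.card (H (n-1) k) := by
  obtain ⟨j, rfl⟩ : ∃ j, k = j + 1 := ⟨k - 1, by omega⟩
  obtain ⟨m, rfl⟩ : ∃ m, n = m + 1 := ⟨n - 1, by omega⟩
  have hj : j < m := by omega
  simp only [Nat.add_sub_cancel]
  rw [Nat.card_congr (Hequiv m j hj), Nat.card_sum]
  rfl
end

section
/- Card(H_n) = 2^n, where H_n is the union over k = 0,...,n of H^k_n. -/
namespace Stmt3Aux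

/-- Partial-sum function: number of `j < t` with `b j = true`. -/
def F (n : ℕ) (b : Fin n → Bool) (t : ℕ) : ℕ :=
  (Finset.univ.filter (fun j : Fin n => (j : ℕ) < t ∧ b j)).card

lemma F_zero (n : ℕ) (b : Fin n → Bool) : F n b 0 = 0 := by
  simp [F]

lemma F_mono (n : ℕ) (b : Fin n → Bool) : Monotone (F n b) := by
  intro s t hst
  apply Finset.card_le_card
  intro j hj
  simp only [Finset.mem_filter, Finset.mem_univ, true_and] at *
  exact ⟨lt_of_lt_of_le hj.1 hst, hj.2⟩

lemma F_le (n : ℕ) (b : Fin n → Bool) (t : ℕ) : F n b t ≤ t := by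
  have := Finset.card_le_card_of_injOn (fun j : Fin n => (j : ℕ))
    (s := Finset.univ.filter (fun j : Fin n => (j : ℕ) < t ∧ b j))
    (t := Finset.range t)
    (by intro j hj
        simp only [Finset.mem_coe, Finset.mem_filter, Finset.mem_univ, true_and] at hj
        simpa using hj.1)
    (by intro a _ c _ h; exact Fin.val_injective h)
  simpa [F] using this

lemma F_succ_lt (n : ℕ) (b : Fin n → Bool) {t : ℕ} (ht : t < n) :
    F n b (t + 1) = F n b t + (if b ⟨t, ht⟩ then 1 else 0) := by
  classical
  have hsplit : (Finset.univ.filter (fun j : Fin n => (j : ℕ) < t + 1 ∧ b j))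
      = (Finset.univ.filter (fun j : Fin n => (j : ℕ) < t ∧ b j)) ∪
        (Finset.univ.filter (fun j : Fin n => j = ⟨t, ht⟩ ∧ b j)) := by
    ext j
    simp only [Finset.mem_filter, Finset.mem_union, Finset.mem_univ, true_and,
      Nat.lt_succ_iff_lt_or_eq, Fin.ext_iff]
    tauto
  have hdisj : Disjoint (Finset.univ.filter (fun j : Fin n => (j : ℕ) < t ∧ b j))
      (Finset.univ.filter (fun j : Fin n => j = ⟨t, ht⟩ ∧ b j)) := by
    rw [Finset.disjoint_left]
    intro j hj hj'
    simp only [Finset.mem_filter, Finset.mem_univ, true_and] at hj hj'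
    rw [hj'.1] at hj
    exact absurd hj.1 (lt_irrefl t)
  have hcard2 : (Finset.univ.filter (fun j : Fin n => j = ⟨t, ht⟩ ∧ b j)).card
      = (if b ⟨t, ht⟩ then 1 else 0) := by
    by_cases hb : b ⟨t, ht⟩
    · rw [if_pos hb]
      have : (Finset.univ.filter (fun j : Fin n => j = ⟨t, ht⟩ ∧ b j)) = {⟨t, ht⟩} := by
        ext j
        simp only [Finset.mem_filter, Finset.mem_univ, true_and, Finset.mem_singleton]
        constructor
        · exact fun h => h.1
        · rintro rfl; exact ⟨rfl, hb⟩
      rw [this, Finset.card_singleton]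
    · rw [if_neg hb]
      have : (Finset.univ.filter (fun j : Fin n => j = ⟨t, ht⟩ ∧ b j)) = ∅ := by
        ext j
        simp only [Finset.mem_filter, Finset.mem_univ, true_and, Finset.notMem_empty,
          iff_false]
        rintro ⟨rfl, h⟩
        exact hb h
      rw [this, Finset.card_empty]
  rw [F, F, hsplit, Finset.card_union_of_disjoint hdisj, hcard2]

lemma F_succ_le (n : ℕ) (b : Fin n → Bool) (t : ℕ) : F n b (t + 1) ≤ F n b t + 1 := by
  by_cases ht : t < n
  · rw [F_succ_lt n b ht]
    split <;> omega
  · have : F n b (t + 1) = F n b t := by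
      unfold F
      congr 1
      ext j
      simp only [Finset.mem_filter, Finset.mem_univ, true_and]
      have := j.isLt
      constructor <;> rintro ⟨h1, h2⟩ <;> exact ⟨by omega, h2⟩
    omega

lemma exists_F_eq (n : ℕ) (b : Fin n → Bool) :
    ∀ N, ∀ m ≤ F n b N, ∃ t ≤ N, F n b t = m := by
  intro N
  induction N with
  | zero => intro m hm; exact ⟨0, le_refl 0, by rw [F_zero] at hm ⊢; omega⟩
  | succ N ih =>
    intro m hm
    by_cases h : m ≤ F n b N
    · obtain ⟨t, ht, h2⟩ := ih m h
      exact ⟨t, by omega, h2⟩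
    · have h1 := F_succ_le n b N
      refine ⟨N + 1, le_refl _, ?_⟩
      omega

/-- The candidate bijection. -/
def g (n : ℕ) (b : Fin n → Bool) : Fin (n + 1) → Fin (n + 1) := fun i =>
  ⟨F n b i, Nat.lt_succ_of_le (le_trans (F_le n b i) (Nat.le_of_lt_succ i.isLt))⟩

lemma g_inj (n : ℕ) : Function.Injective (g n) := by
  intro b b' h
  funext j
  have hF : ∀ t (ht : t ≤ n), F n b t = F n b' t := by
    intro t ht
    have := congrFun h ⟨t, Nat.lt_succ_of_le ht⟩
    simpa [g, Fin.ext_iff] using this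
  have h1 := F_succ_lt n b j.isLt
  have h2 := F_succ_lt n b' j.isLt
  have e1 : F n b j.val = F n b' j.val := hF j.val (le_of_lt j.isLt)
  have e2 : F n b (j.val + 1) = F n b' (j.val + 1) := hF _ j.isLt
  have hj : (⟨j.val, j.isLt⟩ : Fin n) = j := rfl
  rw [hj] at h1 h2
  rw [e2, e1, h2] at h1
  have h3 := Nat.add_left_cancel h1
  cases hb : b j <;> cases hb' : b' j
  · rfl
  · rw [hb, hb'] at h3; simp at h3
  · rw [hb, hb'] at h3; simp at h3
  · rfl

lemma range_g (n : ℕ) (b : Fin n → Bool) :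
    Set.range (g n b) = {x : Fin (n + 1) | (x : ℕ) ≤ F n b n} := by
  ext x
  simp only [Set.mem_range, Set.mem_setOf_eq]
  constructor
  · rintro ⟨i, rfl⟩
    exact F_mono n b (Nat.le_of_lt_succ i.isLt)
  · intro hx
    obtain ⟨t, ht, h2⟩ := exists_F_eq n b n x.val hx
    refine ⟨⟨t, Nat.lt_succ_of_le ht⟩, ?_⟩
    simp [g, Fin.ext_iff, h2]

lemma step_le (n k : ℕ) (f : Fin (n + 1) → Fin (n + 1)) (hmono : Monotone f)
    (hrange : Set.range f = {x : Fin (n + 1) | (x : ℕ) ≤ k})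
    {a c : Fin (n + 1)} (hac : (a : ℕ) + 1 = (c : ℕ)) :
    (f c : ℕ) ≤ (f a : ℕ) + 1 := by
  by_contra hcon
  push_neg at hcon
  have hfc_le : (f c : ℕ) ≤ k := by
    have : f c ∈ Set.range f := ⟨c, rfl⟩
    rw [hrange] at this
    exact this
  have hc := (f c).isLt
  have hxbound : (f a : ℕ) + 1 < n + 1 := by omega
  set x : Fin (n + 1) := ⟨(f a : ℕ) + 1, hxbound⟩ with hxdef
  have hxmem : x ∈ Set.range f := by
    rw [hrange]
    show (f a : ℕ) + 1 ≤ k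
    omega
  obtain ⟨m, hm⟩ := hxmem
  rcases lt_or_ge a m with h1 | h1
  · have : c ≤ m := by
      rw [Fin.le_def]
      rw [Fin.lt_def] at h1
      omega
    have := hmono this
    rw [hm] at this
    rw [Fin.le_def] at this
    simp only [hxdef] at this
    omega
  · have := hmono h1
    rw [hm] at this
    rw [Fin.le_def] at this
    simp only [hxdef] at this
    omega

lemma g_mem (n : ℕ) (b : Fin n → Bool) :
    g n b ∈ ⋃ k ∈ Finset.range (n+1), H n k := by
  simp only [Set.mem_iUnion]
  refine ⟨F n b n, ?_, ?_, ?_, ?_⟩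
  · simp [Nat.lt_succ_of_le (F_le n b n)]
  · intro i; exact F_le n b i
  · intro i j hij
    exact F_mono n b hij
  · rw [range_g]

lemma mem_range_g (n k : ℕ) (f : Fin (n + 1) → Fin (n + 1)) (hf : f ∈ H n k) :
    f ∈ Set.range (g n) := by
  obtain ⟨hle, hmono, hrange⟩ := hf
  classical
  refine ⟨fun j => decide ((f ⟨(j : ℕ) + 1, Nat.succ_lt_succ j.isLt⟩ : ℕ) ≠ (f ⟨(j : ℕ), Nat.lt_succ_of_lt j.isLt⟩ : ℕ)), ?_⟩
  set b := fun j : Fin n => decide ((f ⟨(j : ℕ) + 1, Nat.succ_lt_succ j.isLt⟩ : ℕ) ≠ (f ⟨(j : ℕ), Nat.lt_succ_of_lt j.isLt⟩ : ℕ)) with hbdef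
  have key : ∀ t (ht : t ≤ n), F n b t = (f ⟨t, Nat.lt_succ_of_le ht⟩ : ℕ) := by
    intro t
    induction t with
    | zero =>
      intro ht
      rw [F_zero]
      have h0 : (f ⟨0, Nat.lt_succ_of_le ht⟩ : ℕ) ≤ 0 := hle _
      omega
    | succ t ih =>
      intro ht
      have ht' : t < n := ht
      rw [F_succ_lt n b ht', ih (le_of_lt ht')]
      have hstep := step_le n k f hmono hrange
        (a := ⟨t, Nat.lt_succ_of_le (le_of_lt ht')⟩) (c := ⟨t + 1, Nat.lt_succ_of_le ht⟩) rfl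
      have hmono' : (f ⟨t, Nat.lt_succ_of_le (le_of_lt ht')⟩ : ℕ) ≤
          (f ⟨t + 1, Nat.lt_succ_of_le ht⟩ : ℕ) := by
        exact hmono (Fin.mk_le_mk.mpr (Nat.le_succ t))
      have h1 : (f ⟨t + 1, Nat.succ_lt_succ ht'⟩ : ℕ) = (f ⟨t + 1, Nat.lt_succ_of_le ht⟩ : ℕ) := rfl
      have h2 : (f ⟨t, Nat.lt_succ_of_lt ht'⟩ : ℕ) = (f ⟨t, Nat.lt_succ_of_le (le_of_lt ht')⟩ : ℕ) := rfl
      by_cases heq : (f ⟨t + 1, Nat.succ_lt_succ ht'⟩ : ℕ) = (f ⟨t, Nat.lt_succ_of_lt ht'⟩ : ℕ)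
      · have hb : b ⟨t, ht'⟩ = false := by
          simp only [hbdef, decide_eq_false_iff_not, not_not]
          exact heq
        rw [hb]
        simp only [if_neg Bool.false_ne_true]
        omega
      · have hb : b ⟨t, ht'⟩ = true := by
          simp only [hbdef, decide_eq_true_eq]
          exact heq
        rw [hb, if_pos rfl]
        omega
  funext i
  rw [Fin.ext_iff]
  show F n b i.val = (f i : ℕ)
  have := key i.val (Nat.le_of_lt_succ i.isLt)
  rw [this]

end Stmt3Aux

open Stmt3Aux in
theorem stmt3 (n : ℕ) : Nat.card (⋃ k ∈ Finset.range (n+1), H n k) = 2 ^ n := by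
  have hset : (⋃ k ∈ Finset.range (n+1), H n k) = Set.range (g n) := by
    ext f
    constructor
    · intro hf
      simp only [Set.mem_iUnion] at hf
      obtain ⟨k, _, hk⟩ := hf
      exact mem_range_g n k f hk
    · rintro ⟨b, rfl⟩
      exact g_mem n b
  rw [hset, Nat.card_range_of_injective (g_inj n)]
  simp [Nat.card_eq_fintype_card]
end

section
/- For every integer k ≥ 4, the minimum distance of the binary linear code L_k = { (m, m·G_k) : m ∈ F_2^k } ⊆ F_2^{2k} equals 4. -/
/-- the k×k matrix over F₂ with 0 on the diagonal and 1 elsewhere -/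
def G (k : ℕ) : Matrix (Fin k) (Fin k) (ZMod 2) := fun i j => if i = j then 0 else 1

lemma vecMul_G (k : ℕ) (m : Fin k → ZMod 2) (j : Fin k) :
    Matrix.vecMul m (G k) j = (∑ i, m i) + m j := by
  have h2 : ∀ a : ZMod 2, -a = a := by decide
  simp only [Matrix.vecMul, dotProduct, G]
  have : ∀ i : Fin k, m i * (if i = j then (0 : ZMod 2) else 1)
      = m i - (if i = j then m i else 0) := by
    intro i; by_cases h : i = j <;> simp [h]
  rw [Finset.sum_congr rfl (fun i _ => this i), Finset.sum_sub_distrib,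
    Finset.sum_ite_eq' Finset.univ j m]
  simp [sub_eq_add_neg, h2]

lemma sum_eq_norm (k : ℕ) (m : Fin k → ZMod 2) :
    (∑ i, m i) = (hammingNorm m : ZMod 2) := by
  have h1 : ∀ a : ZMod 2, a ≠ 0 → a = 1 := by decide
  rw [hammingNorm]
  rw [← Finset.sum_filter_ne_zero]
  rw [Finset.sum_congr rfl (fun i hi => h1 (m i) (by simpa using hi))]
  simp

theorem stmt8 (k : ℕ) (hk : 4 ≤ k) :
    IsLeast {w : ℕ | ∃ m : Fin k → ZMod 2, m ≠ 0 ∧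
      w = hammingNorm m + hammingNorm (Matrix.vecMul m (G k))} 4 := by
  constructor
  · -- membership: m = indicator of {0,1}
    set m : Fin k → ZMod 2 := fun i => if i.val < 2 then 1 else 0 with hm
    have hfilter : ({i | m i ≠ 0} : Finset (Fin k)) = {⟨0, by omega⟩, ⟨1, by omega⟩} := by
      ext i
      simp only [Finset.mem_filter, Finset.mem_univ, true_and, Finset.mem_insert,
        Finset.mem_singleton, hm]
      constructor
      · intro h
        by_cases hi : i.val < 2
        · rcases (by omega : i.val = 0 ∨ i.val = 1) with h0 | h0
          · left; exact Fin.ext h0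
          · right; exact Fin.ext h0
        · simp [hi] at h
      · rintro (rfl | rfl) <;> simp
    have hnorm : hammingNorm m = 2 := by
      rw [hammingNorm, hfilter]
      rw [Finset.card_insert_of_notMem (by simp [Fin.ext_iff]), Finset.card_singleton]
    have hsum : (∑ i, m i) = 0 := by
      rw [sum_eq_norm, hnorm]; decide
    have hmne : m ≠ 0 := by
      rw [← hammingNorm_ne_zero_iff, hnorm]; omega
    refine ⟨m, hmne, ?_⟩
    have : Matrix.vecMul m (G k) = m := by
      funext j; rw [vecMul_G, hsum, zero_add]
    rw [this, hnorm]
  · rintro w ⟨m, hm, rfl⟩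
    have hcases : (∑ i, m i) = 0 ∨ (∑ i, m i) = 1 := by
      have : ∀ a : ZMod 2, a = 0 ∨ a = 1 := by decide
      exact this _
    rcases hcases with hs | hs
    · -- codeword = (m, m), weight = 2 * wt m, wt m even so ≥ 2
      have hG : Matrix.vecMul m (G k) = m := by
        funext j; rw [vecMul_G, hs, zero_add]
      rw [hG]
      have h1 : hammingNorm m ≠ 0 := hammingNorm_ne_zero_iff.mpr hm
      have h2 : hammingNorm m ≠ 1 := by
        intro h
        rw [sum_eq_norm, h] at hs
        exact one_ne_zero hs
      omega
    · -- weight = k ≥ 4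
      have hiff : ∀ a : ZMod 2, (1 + a ≠ 0 ↔ ¬ a ≠ 0) := by decide
      have hG : hammingNorm (Matrix.vecMul m (G k)) = (Finset.univ.filter (fun j => ¬ m j ≠ 0)).card := by
        rw [hammingNorm]
        congr 1
        ext j
        simp only [Finset.mem_filter, Finset.mem_univ, true_and, vecMul_G, hs]
        exact hiff (m j)
      rw [hG, hammingNorm]
      have := Finset.card_filter_add_card_filter_not
        (s := (Finset.univ : Finset (Fin k))) (p := fun j => m j ≠ 0)
      simp only [Finset.card_univ, Fintype.card_fin] at this
      omega
end

section
/- For every integer k ≥ 5, the minimum distance of L_k^+ = { (m, m·G_k, m) : m ∈ F_2^k } ⊆ F_2^{3k} equals 6; hence L_k^+ can correct any pattern of at most 2 errors. -/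
lemma vecMulG {k : ℕ} (m : Fin k → ZMod 2) (j : Fin k) :
    Matrix.vecMul m (G k) j = (∑ i, m i) + m j := by
  simp only [Matrix.vecMul, dotProduct, G]
  have h : ∀ i, m i * (if i = j then 0 else 1) = m i + (if i = j then m i else 0) := by
    intro i
    split
    · simp [CharTwo.add_self_eq_zero]
    · simp
  rw [Finset.sum_congr rfl (fun i _ => h i), Finset.sum_add_distrib,
    Finset.sum_ite_eq' Finset.univ j m]
  simp

lemma sum_eq_card {k : ℕ} (m : Fin k → ZMod 2) :
    (∑ i, m i) = (hammingNorm m : ZMod 2) := by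
  have h1 : ∀ x : ZMod 2, x ≠ 0 → x = 1 := by decide
  rw [hammingNorm, ← Finset.sum_filter_ne_zero,
    Finset.sum_congr rfl (fun i hi => h1 _ (Finset.mem_filter.mp hi).2),
    Finset.sum_const, nsmul_eq_mul, mul_one]

lemma lower_bound {k : ℕ} (hk : 5 ≤ k) (m : Fin k → ZMod 2) (hm : m ≠ 0) :
    6 ≤ hammingNorm m + hammingNorm (Matrix.vecMul m (G k)) + hammingNorm m := by
  set n := hammingNorm m with hn
  have hn1 : n ≠ 0 := by
    rw [hn]
    intro h0
    exact hm (hammingNorm_eq_zero.mp h0)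
  have hnk : n ≤ k := by
    calc n ≤ Fintype.card (Fin k) := (Finset.card_filter_le _ _)
    _ = k := Fintype.card_fin k
  rcases Nat.even_or_odd n with he | ho
  · -- even case: vecMul m G = m
    have hcast : (n : ZMod 2) = 0 := by
      rw [(ZMod.natCast_eq_zero_iff n 2)]
      exact he.two_dvd
    have hv : Matrix.vecMul m (G k) = m := by
      funext j
      rw [vecMulG, sum_eq_card, ← hn, hcast, zero_add]
    rw [hv, ← hn]
    have : 2 ≤ n := by
      rcases he with ⟨t, ht⟩; omega
    omega
  · -- odd case
    have hcast : (n : ZMod 2) = 1 := by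
      rcases ho with ⟨t, ht⟩
      rw [ht]
      push_cast
      ring_nf
      simp [CharTwo.two_eq_zero]
    have hv : Matrix.vecMul m (G k) = fun j => 1 + m j := by
      funext j
      rw [vecMulG, sum_eq_card, ← hn, hcast]
    have hiff : ∀ x : ZMod 2, (1 + x ≠ 0 ↔ x = 0) := by decide
    have hnorm : hammingNorm (Matrix.vecMul m (G k)) = k - n := by
      rw [hv]
      have : (Finset.filter (fun j => 1 + m j ≠ 0) Finset.univ)
          = (Finset.filter (fun j => ¬ (m j ≠ 0)) Finset.univ) := by
        apply Finset.filter_congr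
        intro j _
        simp [hiff (m j)]
      rw [hammingNorm, this]
      have hadd := Finset.card_filter_add_card_filter_not
        (s := (Finset.univ : Finset (Fin k))) (p := fun j => m j ≠ 0)
      simp only [Finset.card_univ, Fintype.card_fin] at hadd
      rw [hammingNorm] at hn
      omega
    rw [hnorm]
    omega

theorem stmt11 (k : ℕ) (hk : 5 ≤ k) :
    IsLeast {w : ℕ | ∃ m : Fin k → ZMod 2, m ≠ 0 ∧
      w = hammingNorm m + hammingNorm (Matrix.vecMul m (G k)) + hammingNorm m} 6 ∧
    ∀ (m m' y₁ y₂ y₃ : Fin k → ZMod 2),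
      hammingDist y₁ m + hammingDist y₂ (Matrix.vecMul m (G k)) + hammingDist y₃ m ≤ 2 →
      hammingDist y₁ m' + hammingDist y₂ (Matrix.vecMul m' (G k)) + hammingDist y₃ m' ≤ 2 →
      m = m' := by
  refine ⟨⟨?_, ?_⟩, ?_⟩
  · -- membership: witness with two ones
    have h0 : (0 : ℕ) < k := by omega
    have h1 : (1 : ℕ) < k := by omega
    set a : Fin k := ⟨0, h0⟩
    set b : Fin k := ⟨1, h1⟩
    have hab : a ≠ b := by simp [a, b, Fin.ext_iff]
    refine ⟨fun i => if i = a ∨ i = b then 1 else 0, ?_, ?_⟩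
    · intro h
      have := congrFun h a
      simp at this
    · set m : Fin k → ZMod 2 := fun i => if i = a ∨ i = b then 1 else 0 with hmdef
      have hfil : (Finset.filter (fun i => m i ≠ 0) Finset.univ) = {a, b} := by
        ext i
        simp only [Finset.mem_filter, Finset.mem_univ, true_and, Finset.mem_insert,
          Finset.mem_singleton, hmdef]
        split <;> simp_all
      have hnm : hammingNorm m = 2 := by
        rw [hammingNorm, hfil, Finset.card_insert_of_notMem (by simp [hab]),
          Finset.card_singleton]
      have hcast : ((hammingNorm m : ℕ) : ZMod 2) = 0 := by rw [hnm]; decide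
      have hv : Matrix.vecMul m (G k) = m := by
        funext j
        rw [vecMulG, sum_eq_card, hcast, zero_add]
      rw [hv, hnm]
  · rintro w ⟨m, hm, hweq⟩
    rw [hweq]
    exact lower_bound hk m hm
  · intro m m' y₁ y₂ y₃ h1 h2
    by_contra hne
    have hsub : m - m' ≠ 0 := sub_ne_zero.mpr hne
    have hlb := lower_bound hk (m - m') hsub
    rw [Matrix.sub_vecMul] at hlb
    have hd : ∀ x y : Fin k → ZMod 2, hammingNorm (x - y) = hammingDist x y := fun x y => by
      rw [hammingDist_comm, hammingDist_eq_hammingNorm, neg_add_eq_sub]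
    rw [hd, hd] at hlb
    have t1 : hammingDist m m' ≤ hammingDist y₁ m + hammingDist y₁ m' :=
      hammingDist_triangle_left m m' y₁
    have t2 : hammingDist (Matrix.vecMul m (G k)) (Matrix.vecMul m' (G k)) ≤
        hammingDist y₂ (Matrix.vecMul m (G k)) + hammingDist y₂ (Matrix.vecMul m' (G k)) :=
      hammingDist_triangle_left _ _ y₂
    have t3 : hammingDist m m' ≤ hammingDist y₃ m + hammingDist y₃ m' :=
      hammingDist_triangle_left m m' y₃
    omega
end
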